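/- Let 𝔹 be a B-score for the observed outcome (i.e., a Bt-score with 𝔹 = 𝔹_0 = 𝔹_1). Then for each t ∈ {0,1}, μ_t(x) = E[𝔽_t(𝔹) | X = x] for P∘X⁻¹-a.e. x, where 𝔽_t is the measurable function from the B-score definition; in particular the mixing distribution (the conditional law of 𝔹 given X = x) is the same for t = 0 and t = 1, and only the integrand 𝔽_t depends on t. -/
import Mathlib


open MeasureTheory ProbabilityTheory

/-- **CATE by B-score.** If `B` is a B-score (a Bt-score with `B = B 0 = B 1`) for the
observed outcome `ω ↦ Y (T ω) ω` with outcome-mean functions `F t`, then for each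
`t ∈ {0,1}`, `μ_t(x) = E[F t (B) | X = x]` for a.e. `x`: the mixing distribution (the
conditional law of `B` given `X = x`) is the same for `t = 0` and `t = 1`, and only the
integrand `F t` depends on `t`. -/
theorem cate_by_b_score
    {Ω : Type*} [MeasurableSpace Ω] (μ : Measure Ω) [IsProbabilityMeasure μ]
    {m d n : ℕ}
    (X : Ω → Fin m → ℝ) (hX : Measurable X)
    (T : Ω → Bool) (hT : Measurable T)
    (Y : Bool → Ω → Fin d → ℝ) (hY : ∀ t, Measurable (Y t))
    (hYint : ∀ t, Integrable (Y t) μ)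
    (B : Ω → Fin n → ℝ) (hB : Measurable B)
    (F : Bool → (Fin n → ℝ) → Fin d → ℝ) (hF : ∀ t, Measurable (F t))
    (hFint : ∀ t, Integrable (fun ω => F t (B ω)) μ)
    -- B-score, first condition: `E[Y(t) | σ(B, X)] = F t (B)` a.s.
    (hscore₁ : ∀ t, μ[Y t | MeasurableSpace.comap (fun ω => (B ω, X ω)) inferInstance]
        =ᵐ[μ] fun ω => F t (B ω))
    -- B-score, second condition: `E[Y | σ(B)] = F t (B)` a.s. on `{T = t}`,
    -- where `Y = Y(T)` is the observed outcome (consistency).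
    (hscore₂ : ∀ t, ∀ᵐ ω ∂μ, T ω = t →
        (μ[(fun ω => Y (T ω) ω) | MeasurableSpace.comap B inferInstance]) ω = F t (B ω)) :
    -- conclusion: `μ_t(x) = E[F t (B) | X = x]` for a.e. `x`
    ∀ t, μ[Y t | MeasurableSpace.comap X inferInstance]
      =ᵐ[μ] μ[(fun ω => F t (B ω)) | MeasurableSpace.comap X inferInstance] := by
  intro t
  have hle : MeasurableSpace.comap X inferInstance ≤
      MeasurableSpace.comap (fun ω => (B ω, X ω)) inferInstance := by
    rintro s ⟨A, hA, rfl⟩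
    refine ⟨Set.univ ×ˢ A, MeasurableSet.univ.prod hA, ?_⟩
    ext ω; simp
  have hle2 : MeasurableSpace.comap (fun ω => (B ω, X ω)) inferInstance ≤
      (inferInstance : MeasurableSpace Ω) := (hB.prodMk hX).comap_le
  calc μ[Y t | MeasurableSpace.comap X inferInstance]
      =ᵐ[μ] μ[μ[Y t | MeasurableSpace.comap (fun ω => (B ω, X ω)) inferInstance]
          | MeasurableSpace.comap X inferInstance] :=
        (condExp_condExp_of_le hle hle2).symm
    _ =ᵐ[μ] μ[(fun ω => F t (B ω)) | MeasurableSpace.comap X inferInstance] :=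
        condExp_congr_ae (hscore₁ t)
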